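/- Let (Ω, ℱ, Q) be a probability space with filtration 𝔽 = (ℱ_t)_{t∈[0,∞)}, let Λ = (Λ_t)_{t∈[0,∞)} be a nonnegative supermartingale with respect to 𝔽 under Q with Λ_0 = 1 Q-almost surely, and let 𝒯 : Ω → [0,∞] be a stopping time of 𝔽 such that for every T ∈ [0,∞) one has Λ_T = 0 Q-almost surely on the event {𝒯 ≤ T}. Suppose P is a probability measure on (Ω, ℱ) satisfying the Wald-type identity P(𝒯 > T) = E^Q[Λ_T · 1_{𝒯 > T}] for every T ∈ [0,∞). Then Λ is a martingale with respect to 𝔽 under Q if and only if P(𝒯 < ∞) = 0. -/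

import Mathlib

open MeasureTheory
open scoped NNReal ENNReal

/-- **Lemma 1 of the paper.** A nonnegative supermartingale `Λ` with `Λ 0 = 1`,
vanishing at time `T` on the event `{𝒯 ≤ T}`, is a martingale under `Q` if and only if
the measure `P` satisfying the Wald-type identity `P(𝒯 > T) = E^Q[Λ_T · 1_{𝒯 > T}]`
gives no mass to `{𝒯 < ∞}`. -/
theorem stmt_0 {Ω : Type*} {mΩ : MeasurableSpace Ω}
    (Q P : Measure Ω) [IsProbabilityMeasure Q] [IsProbabilityMeasure P]
    (ℱ : Filtration ℝ≥0 mΩ)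
    (Λ : ℝ≥0 → Ω → ℝ)
    (hΛsup : Supermartingale Λ ℱ Q)
    (hΛnonneg : ∀ t : ℝ≥0, 0 ≤ᵐ[Q] Λ t)
    (hΛ0 : Λ 0 =ᵐ[Q] fun _ => 1)
    (𝒯 : Ω → ℝ≥0∞)
    (h𝒯 : ∀ t : ℝ≥0, MeasurableSet[ℱ t] {ω | 𝒯 ω ≤ (t : ℝ≥0∞)})
    (hvanish : ∀ T : ℝ≥0, ∀ᵐ ω ∂Q, 𝒯 ω ≤ (T : ℝ≥0∞) → Λ T ω = 0)
    (hWald : ∀ T : ℝ≥0,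
      (P {ω | (T : ℝ≥0∞) < 𝒯 ω}).toReal = ∫ ω in {ω | (T : ℝ≥0∞) < 𝒯 ω}, Λ T ω ∂Q) :
    Martingale Λ ℱ Q ↔ P {ω | 𝒯 ω < ∞} = 0 := by
  have hmeas : ∀ T : ℝ≥0, MeasurableSet {ω | 𝒯 ω ≤ (T : ℝ≥0∞)} :=
    fun T => ℱ.le T _ (h𝒯 T)
  have hcompl : ∀ T : ℝ≥0, {ω | (T : ℝ≥0∞) < 𝒯 ω} = {ω | 𝒯 ω ≤ (T : ℝ≥0∞)}ᶜ := by
    intro T; ext ω; simp [not_le]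
  have hint : ∀ T, Integrable (Λ T) Q := fun T => hΛsup.integrable T
  -- E[Λ_T] = P(𝒯 > T)
  have key : ∀ T : ℝ≥0, ∫ ω, Λ T ω ∂Q = (P {ω | (T : ℝ≥0∞) < 𝒯 ω}).toReal := by
    intro T
    rw [hWald T]
    have h0 : ∫ ω in {ω | 𝒯 ω ≤ (T : ℝ≥0∞)}, Λ T ω ∂Q = 0 := by
      rw [setIntegral_congr_ae (hmeas T) ((hvanish T).mono fun ω h hω => h hω)]
      simp
    have := integral_add_compl (hmeas T) (hint T)
    rw [hcompl T]
    linarith [this, h0]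
  have h10 : ∫ ω, Λ 0 ω ∂Q = 1 := by
    rw [integral_congr_ae hΛ0]
    simp
  constructor
  · intro hM
    have hzero : ∀ n : ℕ, P {ω | 𝒯 ω ≤ ((n : ℝ≥0) : ℝ≥0∞)} = 0 := by
      intro n
      have hT : ∫ ω, Λ (n : ℝ≥0) ω ∂Q = 1 := by
        have hc := hM.2 0 (n : ℝ≥0) zero_le
        calc ∫ ω, Λ (n : ℝ≥0) ω ∂Q = ∫ ω, (Q[Λ (n:ℝ≥0)|ℱ 0]) ω ∂Q :=
              (integral_condExp (ℱ.le 0)).symm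
          _ = ∫ ω, Λ 0 ω ∂Q := integral_congr_ae hc
          _ = 1 := h10
      have h1 : P {ω | ((n:ℝ≥0) : ℝ≥0∞) < 𝒯 ω} = 1 := by
        have := (key (n : ℝ≥0)).symm.trans hT
        exact (ENNReal.toReal_eq_one_iff _).mp this
      have := prob_compl_eq_one_iff (μ := P) (hmeas (n : ℝ≥0))
      rw [← hcompl (n : ℝ≥0)] at this
      exact this.mp h1
    have hsub : {ω | 𝒯 ω < ∞} ⊆ ⋃ n : ℕ, {ω | 𝒯 ω ≤ ((n : ℝ≥0) : ℝ≥0∞)} := by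
      intro ω hω
      obtain ⟨n, hn⟩ := ENNReal.exists_nat_gt (LT.lt.ne hω)
      refine Set.mem_iUnion.mpr ⟨n, ?_⟩
      simp only [Set.mem_setOf_eq]
      exact le_of_lt (by simpa using hn)
    exact measure_mono_null hsub (measure_iUnion_null fun n => hzero n)
  · intro hP
    have hT1 : ∀ T : ℝ≥0, ∫ ω, Λ T ω ∂Q = 1 := by
      intro T
      have h0 : P {ω | 𝒯 ω ≤ (T : ℝ≥0∞)} = 0 := by
        refine measure_mono_null ?_ hP
        intro ω hω
        exact lt_of_le_of_lt hω ENNReal.coe_lt_top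
      have h1 : P {ω | (T : ℝ≥0∞) < 𝒯 ω} = 1 := by
        rw [hcompl T]
        exact (prob_compl_eq_one_iff (hmeas T)).mpr h0
      rw [key T, h1]; simp
    refine ⟨hΛsup.stronglyAdapted, fun s t hst => ?_⟩
    have hle := hΛsup.2.1 s t hst
    have hfi : Integrable (Λ s - Q[Λ t|ℱ s]) Q := (hint s).sub integrable_condExp
    have hnn : 0 ≤ᵐ[Q] (Λ s - Q[Λ t|ℱ s]) := by
      filter_upwards [hle] with ω hω
      simpa using hω
    have hiz : ∫ ω, (Λ s - Q[Λ t|ℱ s]) ω ∂Q = 0 := by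
      simp only [Pi.sub_apply]
      rw [integral_sub (hint s) integrable_condExp, integral_condExp (ℱ.le s), hT1 s, hT1 t]
      ring
    have := (integral_eq_zero_iff_of_nonneg_ae hnn hfi).mp hiz
    filter_upwards [this] with ω hω
    have : Λ s ω - (Q[Λ t|ℱ s]) ω = 0 := hω
    linarith
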